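/- Correctness of the separation model for the compact formulation (SEP_CF cover condition): Let s¹, s⁰ : V → {0, 1} and y⁰ assign a value y⁰_{i,p} ∈ {0, 1} to each i ∈ V and p ∈ P_i, and suppose that s⁰_j ≥ 1 − s¹_j for every j ∈ V and that for every i ∈ V, Σ_{p ∈ P_i} p·y⁰_{i,p} + Σ_{j ∈ N_i} d(j, i)·(s⁰_j + s¹_i − 1) ≤ h(i) − 1. Then, setting X = {i ∈ V : s¹_i = 1}, every node i ∈ X satisfies Σ_{p ∈ P_i} p·y⁰_{i,p} + Σ_{j ∈ N_i ∖ X} d(j, i) ≤ h(i) − 1; in particular, the incentive level selected by y⁰ for i together with all influences from outside X is strictly below the threshold h(i). -/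

import Mathlib

open scoped Classical
open Finset

noncomputable section

/-- In-neighbors of `i` in the arc set `E`. -/
def Nbr {V : Type*} [Fintype V] (E : Finset (V × V)) (i : V) : Finset V :=
  Finset.univ.filter (fun j => (j, i) ∈ E)

/-- Correctness of the separation model for the compact formulation (SEP_CF cover
condition): for `X = {i : s¹ i = 1}`, every `i ∈ X` has its selected incentive plus all
influences from outside `X` strictly below the threshold `h i`. -/
theorem sep_cf_cover_condition {V : Type*} [Fintype V]
    (E : Finset (V × V)) (d : V → V → ℝ) (h : V → ℝ) (P : V → Finset ℝ) (α : ℝ)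
    (hE : ∀ a ∈ E, a.1 ≠ a.2)
    (hd : ∀ a ∈ E, 0 < d a.1 a.2)
    (hh : ∀ i, 0 < h i)
    (hP0 : ∀ i, (0 : ℝ) ∈ P i)
    (hPnn : ∀ i, ∀ q ∈ P i, 0 ≤ q)
    (hα0 : 0 ≤ α) (hα1 : α ≤ 1)
    (s1 s0 : V → ℝ) (y0 : V → ℝ → ℝ)
    (hs1 : ∀ i, s1 i = 0 ∨ s1 i = 1)
    (hs0 : ∀ i, s0 i = 0 ∨ s0 i = 1)
    (hy0 : ∀ i, ∀ q ∈ P i, y0 i q = 0 ∨ y0 i q = 1)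
    (hlink : ∀ j, s0 j ≥ 1 - s1 j)
    (hcov : ∀ i, ∑ q ∈ P i, q * y0 i q
        + ∑ j ∈ Nbr E i, d j i * (s0 j + s1 i - 1) ≤ h i - 1) :
    ∀ i ∈ Finset.univ.filter (fun i => s1 i = 1),
      ∑ q ∈ P i, q * y0 i q
          + ∑ j ∈ Nbr E i \ Finset.univ.filter (fun i' => s1 i' = 1), d j i
        ≤ h i - 1 := by
  intro i hi
  rw [Finset.mem_filter] at hi
  refine le_trans (add_le_add_right ?_ _) (hcov i)
  calc ∑ j ∈ Nbr E i \ Finset.univ.filter (fun i' => s1 i' = 1), d j i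
      = ∑ j ∈ Nbr E i \ Finset.univ.filter (fun i' => s1 i' = 1), d j i * (s0 j + s1 i - 1) := by
        refine Finset.sum_congr rfl fun j hj => ?_
        rw [Finset.mem_sdiff, Finset.mem_filter] at hj
        have h0 : s1 j = 0 := (hs1 j).resolve_right fun hc => hj.2 ⟨Finset.mem_univ _, hc⟩
        have : s0 j = 1 := by
          rcases hs0 j with h1 | h1
          · exfalso; have := hlink j; rw [h1, h0] at this; linarith
          · exact h1
        rw [this, hi.2]; ring
    _ ≤ ∑ j ∈ Nbr E i, d j i * (s0 j + s1 i - 1) := by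
        refine Finset.sum_le_sum_of_subset_of_nonneg (Finset.sdiff_subset) fun j hj _ => ?_
        have hd' : 0 < d j i := hd (j, i) (by simpa [Nbr] using hj)
        rcases hs0 j with h1 | h1 <;> rw [h1, hi.2] <;> nlinarith
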